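/- Counterexample to decomposition (Remark 2.5): Let V = {u₁,u₂,u₃,v₁,v₂,v₃} with r(uᵢ,uⱼ) = r(vᵢ,vⱼ) = 3 for i ≠ j and r(uᵢ,vⱼ) = 0, and let a be the tree metric given by T with V(T) = V ∪ {u,v}, edges uv and uuᵢ, vvᵢ, lengths l(uv) = 1, l(uuᵢ) = l(vvᵢ) = 2. Then the integer capacity y with y(uᵢuⱼ) = y(vᵢvⱼ) = 1 for i < j, y(uᵢvᵢ) = 1, y(uᵢvⱼ) = 0 for i ≠ j, is a realization of r, and its cost is strictly less than the minimum total cost of any pair of integer realizations obtained by solving the two subproblems on {u₁,u₂,u₃} and {v₁,v₂,v₃} independently (i.e., any integer realization y' with y'(uᵢvⱼ) = 0 for all i,j has strictly larger cost). -/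

import Mathlib

open scoped Classical

/-- Nodes: `(false, i)` is `uᵢ`, `(true, i)` is `vᵢ`. -/
abbrev Vtx : Type := Bool × Fin 3

/-- The tree metric of Remark 2.5: within a side the distance is `2 + 2 = 4`,
across the sides it is `2 + 1 + 2 = 5`. -/
noncomputable def a15 : Vtx → Vtx → ℝ := fun p q =>
  if p = q then 0 else if p.1 = q.1 then 4 else 5

/-- The requirement: `r(uᵢ,uⱼ) = r(vᵢ,vⱼ) = 3` for `i ≠ j`, and `0` across the sides. -/
def r15 : Vtx → Vtx → ℕ := fun p q => if p.1 = q.1 ∧ p.2 ≠ q.2 then 3 else 0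

/-- The claimed optimal integer realization: capacity 1 on each within-side pair and on
each pair `uᵢvᵢ`. -/
def r15y : Vtx → Vtx → ℕ := fun p q =>
  if p.1 = q.1 ∧ p.2 ≠ q.2 then 1 else if p.1 ≠ q.1 ∧ p.2 = q.2 then 1 else 0

/-- `y` is an integer realization of `r15`: every cut separating `s` from `t` has
capacity at least `r15 s t`. -/
def IsRealization15 (y : Vtx → Vtx → ℕ) : Prop :=
  ∀ s t : Vtx, s ≠ t → ∀ X : Finset Vtx, s ∈ X → t ∉ X →
    r15 s t ≤ ∑ i ∈ X, ∑ j ∈ Xᶜ, y i j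

/-- Total cost `Σ_{e ∈ E(K_V)} a(e)·y(e)`, written as half the sum over ordered pairs. -/
noncomputable def cost15 (y : Vtx → Vtx → ℕ) : ℝ :=
  (1 / 2) * ∑ i : Vtx, ∑ j : Vtx, a15 i j * (y i j : ℝ)

/-- Counterexample to decomposition (Remark 2.5): `r15y` is an integer realization of
`r15`, and its cost is strictly smaller than the cost of every symmetric integer
realization `y'` that uses no cross edge `uᵢvⱼ` (i.e. than any solution obtained by
solving the two subproblems on `{u₁,u₂,u₃}` and `{v₁,v₂,v₃}` independently). -/
theorem stmt_15 :
    IsRealization15 r15y ∧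
    ∀ y' : Vtx → Vtx → ℕ, (∀ i j, y' i j = y' j i) → (∀ i, y' i i = 0) →
      IsRealization15 y' →
      (∀ i j : Fin 3, y' (false, i) (true, j) = 0) →
      cost15 r15y < cost15 y' := by
  constructor
  · unfold IsRealization15; decide
  · intro y' hsymm hdiag hreal hcross

    have hcross' : ∀ i j : Fin 3, y' (true, i) (false, j) = 0 := fun i j =>
      (hsymm _ _).trans (hcross j i)
    have hdeg : ∀ b : Bool, ∀ i : Fin 3, 3 ≤ ∑ j : Vtx, y' (b, i) j := by
      intro b i
      have hne : ((b, i) : Vtx) ≠ (b, i + 1) := by simp [Prod.ext_iff]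
      have h := hreal (b, i) (b, i + 1) hne {(b, i)} (Finset.mem_singleton_self _)
        (by simp [Prod.ext_iff])
      rw [Finset.sum_singleton] at h
      have h3 : r15 (b, i) (b, i + 1) = 3 := by simp [r15]
      rw [h3] at h
      calc 3 ≤ _ := h
        _ ≤ ∑ j : Vtx, y' (b, i) j := Finset.sum_le_sum_of_subset (Finset.subset_univ _)
    have hdeg' : ∀ b : Bool, ∀ i : Fin 3, 3 ≤ ∑ j : Fin 3, y' (b, i) (b, j) := by
      intro b i
      have h := hdeg b i
      rw [Fintype.sum_prod_type, Fintype.sum_bool] at h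
      cases b
      · simpa [hcross] using h
      · simpa [hcross'] using h
    have hside : ∀ b : Bool, 10 ≤ ∑ i : Fin 3, ∑ j : Fin 3, y' (b, i) (b, j) := by
      intro b
      have h0 := hdeg' b 0; have h1 := hdeg' b 1; have h2 := hdeg' b 2
      simp only [Fin.sum_univ_three] at h0 h1 h2 ⊢
      have e01 := hsymm (b, 0) (b, 1); have e02 := hsymm (b, 0) (b, 2)
      have e12 := hsymm (b, 1) (b, 2)
      have d0 := hdiag (b, 0); have d1 := hdiag (b, 1); have d2 := hdiag (b, 2)
      omega
    have hc1 : cost15 r15y = 39 := by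
      simp only [cost15, Fintype.sum_prod_type, Fintype.sum_bool, Fin.sum_univ_three]
      norm_num [a15, r15y, Prod.ext_iff, Fin.ext_iff]
    have hc2 : cost15 y' =
        2 * ((∑ i : Fin 3, ∑ j : Fin 3, y' (false, i) (false, j) : ℕ) : ℝ)
        + 2 * ((∑ i : Fin 3, ∑ j : Fin 3, y' (true, i) (true, j) : ℕ) : ℝ) := by
      simp only [cost15, Fintype.sum_prod_type, Fintype.sum_bool, Fin.sum_univ_three]
      simp [a15, Prod.ext_iff, Fin.ext_iff, hcross, hcross', hdiag]
      push_cast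
      ring
    rw [hc1, hc2]
    have hf : (10 : ℝ) ≤ ((∑ i : Fin 3, ∑ j : Fin 3, y' (false, i) (false, j) : ℕ) : ℝ) := by
      exact_mod_cast hside false
    have ht : (10 : ℝ) ≤ ((∑ i : Fin 3, ∑ j : Fin 3, y' (true, i) (true, j) : ℕ) : ℝ) := by
      exact_mod_cast hside true
    linarith
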